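/- arXiv:2510.18015 — 5 statements merged into one kernel-verified Lean document; each statement's English description precedes it below -/
import Mathlib

section
/- Let d ≥ 1 be an integer. For every z ∈ ℂ with 0 < |z| < 1, the winding map h_d is real (Fréchet) differentiable at z, the operator norm of its derivative satisfies ‖Dh_d(z)‖ = d, and its minimal expansion satisfies min over unit vectors v of ‖Dh_d(z)v‖ = 1. For every z with |z| > 1, h_d is differentiable at z with ‖Dh_d(z)‖ = min over unit vectors v of ‖Dh_d(z)v‖ = d·|z|^{d−1}. -/
/-- The winding map of degree `d`: `h_d(z) = |z|^(1-d) * z^d` for `|z| ≤ 1`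
(so `h_d(r e^{it}) = r e^{idt}` there), and `h_d(z) = z^d` for `|z| ≥ 1`. -/
noncomputable def windingMap (d : ℕ) (z : ℂ) : ℂ :=
  if ‖z‖ ≤ 1 then ((‖z‖ ^ ((1 : ℝ) - (d : ℝ)) : ℝ) : ℂ) * z ^ d
  else z ^ d

lemma winding_inner_deriv (d : ℕ) (hd : 1 ≤ d) (z : ℂ) (h0 : 0 < ‖z‖)
    (h1 : ‖z‖ < 1) :
    ∃ L : ℂ →L[ℝ] ℂ, HasFDerivAt (windingMap d) L z ∧ ∀ v : ℂ,
      L v = z ^ d * ((‖z‖ ^ (-1 - (d:ℝ)) : ℝ) : ℂ) *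
        (((starRingEnd ℂ z * v).re : ℂ) + ((d : ℝ) * (starRingEnd ℂ z * v).im : ℝ) * Complex.I) := by
  have hz : z ≠ 0 := by
    intro h; rw [h] at h0; simp at h0
  set R := ‖z‖ with hRdef
  have hRne : R ≠ 0 := h0.ne'
  -- derivative of abs
  have habs : HasFDerivAt (fun w : ℂ => ‖w‖)
      (R⁻¹ • (z.re • Complex.reCLM + z.im • Complex.imCLM)) z := by
    have hre : HasFDerivAt (fun w : ℂ => w.re) Complex.reCLM z := Complex.reCLM.hasFDerivAt
    have him : HasFDerivAt (fun w : ℂ => w.im) Complex.imCLM z := Complex.imCLM.hasFDerivAt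
    have hnsq : HasFDerivAt (fun w : ℂ => Complex.normSq w)
        ((z.re • Complex.reCLM + z.re • Complex.reCLM) +
          (z.im • Complex.imCLM + z.im • Complex.imCLM)) z := by
      exact ((hre.mul hre).add (him.mul him)).congr_of_eventuallyEq
        (Filter.Eventually.of_forall fun w => by simp [Complex.normSq_apply])
    have hs : Complex.normSq z ≠ 0 := by simpa [Complex.normSq_eq_zero] using hz
    have hsqrt := (Real.hasDerivAt_sqrt hs).comp_hasFDerivAt z hnsq
    simp only [Function.comp_def] at hsqrt
    have hfun : (fun w : ℂ => Real.sqrt (Complex.normSq w)) = fun w : ℂ => ‖w‖ := by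
      funext w; rw [Complex.norm_def]
    rw [hfun] at hsqrt
    refine hsqrt.congr_fderiv ?_
    have hR : Real.sqrt (Complex.normSq z) = R := (Complex.norm_def z).symm
    ext v
    simp [hR]
    field_simp
    ring
  -- derivative of abs ^ p
  set p : ℝ := 1 - (d : ℝ) with hp
  have hrpow := (Real.hasDerivAt_rpow_const (x := R) (p := p) (Or.inl hRne)).comp_hasFDerivAt z habs
  have hofReal := Complex.ofRealCLM.hasFDerivAt.comp z hrpow
  have hpow : HasFDerivAt (fun w : ℂ => w ^ d)
      ((ContinuousLinearMap.smulRight (1 : ℂ →L[ℂ] ℂ) ((d : ℂ) * z ^ (d - 1))).restrictScalars ℝ) z :=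
    (hasDerivAt_pow d z).hasFDerivAt.restrictScalars ℝ
  have hmul := hofReal.mul hpow
  refine ⟨_, hmul.congr_of_eventuallyEq ?_, ?_⟩
  · have hopen : IsOpen {w : ℂ | ‖w‖ < 1} := by
      have : Continuous (fun w : ℂ => ‖w‖) := continuous_norm
      exact isOpen_lt this continuous_const
    filter_upwards [hopen.mem_nhds (by simpa using h1)] with w hw
    simp [windingMap, hw.le, Function.comp_def, hp]
  · intro v
    simp only [ContinuousLinearMap.add_apply, ContinuousLinearMap.smul_apply,
      ContinuousLinearMap.coe_comp', Function.comp_apply, ContinuousLinearMap.coe_restrictScalars',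
      ContinuousLinearMap.smulRight_apply, ContinuousLinearMap.one_apply,
      Complex.ofRealCLM_apply, ContinuousLinearMap.coe_smul',
      Complex.reCLM_apply, Complex.imCLM_apply, Pi.smul_apply, Pi.add_apply, smul_eq_mul]
    simp only [← hRdef]
    set s : ℝ := R ^ (-1 - (d:ℝ)) with hs
    have hRp : R ^ p = s * (R * R) := by
      rw [show p = (-1 - (d:ℝ)) + 1 + 1 by rw [hp]; ring, Real.rpow_add h0, Real.rpow_add h0,
        Real.rpow_one]
      ring
    have hRp1 : R ^ (p - 1) = s * R := by
      rw [show p - 1 = (-1 - (d:ℝ)) + 1 by rw [hp]; ring, Real.rpow_add h0, Real.rpow_one]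
    have ha : ((starRingEnd ℂ) z * v).re = z.re * v.re + z.im * v.im := by
      simp [Complex.mul_re]
    have hb : ((starRingEnd ℂ) z * v).im = z.re * v.im - z.im * v.re := by
      simp [Complex.mul_im]; ring
    have hzd : z ^ d = z ^ (d - 1) * z := by
      conv_lhs => rw [← Nat.sub_add_cancel hd]
      rw [pow_succ]
    have hsq : R * R = z.re * z.re + z.im * z.im := by
      have h := Complex.sq_norm z
      rw [Complex.normSq_apply] at h
      rw [← hRdef] at h
      rw [← pow_two]
      exact h
    have hscal : p * (s * R) * (R⁻¹ * (z.re * v.re + z.im * v.im))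
        = p * s * (z.re * v.re + z.im * v.im) := by
      field_simp
    rw [hRp, hRp1, hscal, ha, hb, hzd, hsq, hp]
    push_cast
    rw [Complex.ext_iff]
    constructor <;>
      simp only [Complex.mul_re, Complex.mul_im, Complex.add_re, Complex.add_im, Complex.sub_re,
        Complex.sub_im, Complex.ofReal_re, Complex.ofReal_im, Complex.I_re, Complex.I_im,
        Complex.natCast_re, Complex.natCast_im, Complex.one_re, Complex.one_im] <;>
      ring
    

lemma winding_inner (d : ℕ) (hd : 1 ≤ d) (z : ℂ) (h0 : 0 < ‖z‖)
    (h1 : ‖z‖ < 1) :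
    ∃ L : ℂ →L[ℝ] ℂ, HasFDerivAt (windingMap d) L z ∧ ‖L‖ = (d : ℝ) ∧
      IsLeast {r : ℝ | ∃ v : ℂ, ‖v‖ = 1 ∧ r = ‖L v‖} 1 := by
  obtain ⟨L, hL, hLv⟩ := winding_inner_deriv d hd z h0 h1
  set R := ‖z‖ with hRdef
  have hRne : R ≠ 0 := h0.ne'
  have hz : z ≠ 0 := by simpa using norm_ne_zero_iff.mp hRne
  set s : ℝ := R ^ (-1 - (d : ℝ)) with hs
  have hspos : 0 < s := Real.rpow_pos_of_pos h0 _
  have hRs : R ^ d * s = R⁻¹ := by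
    rw [hs, ← Real.rpow_natCast R d, ← Real.rpow_add h0,
      show (d : ℝ) + (-1 - d) = -1 by ring, Real.rpow_neg_one]
  -- norm formula
  have hnorm : ∀ v : ℂ, ‖L v‖ = R⁻¹ *
      Real.sqrt (((starRingEnd ℂ) z * v).re ^ 2 + ((d : ℝ) * ((starRingEnd ℂ) z * v).im) ^ 2) := by
    intro v
    rw [hLv v]
    rw [show ‖(z ^ d * ((R ^ (-1 - (d:ℝ)) : ℝ) : ℂ) *
        ((((starRingEnd ℂ) z * v).re : ℂ) + (((d : ℝ) * ((starRingEnd ℂ) z * v).im : ℝ) : ℂ) * Complex.I))‖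
      = ‖(z ^ d * ((s : ℝ) : ℂ) *
        ((((starRingEnd ℂ) z * v).re : ℂ) + (((d : ℝ) * ((starRingEnd ℂ) z * v).im : ℝ) : ℂ) * Complex.I))‖ from rfl]
    rw [norm_mul, norm_mul, Complex.norm_add_mul_I, norm_pow, Complex.norm_real, Real.norm_eq_abs,
      abs_of_pos hspos, ← hRdef, hRs]
  -- the squares identity
  have hab : ∀ v : ℂ, ((starRingEnd ℂ) z * v).re ^ 2 + ((starRingEnd ℂ) z * v).im ^ 2
      = (R * ‖v‖) ^ 2 := by
    intro v
    have h := Complex.sq_norm ((starRingEnd ℂ) z * v)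
    rw [Complex.normSq_apply, norm_mul, Complex.norm_conj, ← hRdef] at h
    nlinarith [h]
  have hd1 : (1 : ℝ) ≤ (d : ℝ) := by exact_mod_cast hd
  have hd2 : (1 : ℝ) ≤ (d : ℝ) ^ 2 := by nlinarith
  -- radial and tangential unit vectors
  have hvr : ‖z * ((R : ℝ) : ℂ)⁻¹‖ = 1 := by
    rw [norm_mul, norm_inv, Complex.norm_real, Real.norm_eq_abs, abs_of_pos h0,
      ← hRdef]
    field_simp
  have hur : (starRingEnd ℂ) z * (z * ((R : ℝ) : ℂ)⁻¹) = (R : ℂ) := by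
    have h2 : (starRingEnd ℂ) z * z = ((R ^ 2 : ℝ) : ℂ) := by
      rw [mul_comm, Complex.mul_conj]
      norm_cast
      rw [← Complex.sq_norm, hRdef]
    rw [← mul_assoc, h2]
    have : ((R : ℝ) : ℂ) ≠ 0 := by exact_mod_cast hRne
    field_simp
    push_cast
    ring
  have hvt : ‖Complex.I * (z * ((R : ℝ) : ℂ)⁻¹)‖ = 1 := by
    rw [norm_mul, Complex.norm_I, one_mul, hvr]
  have hut : (starRingEnd ℂ) z * (Complex.I * (z * ((R : ℝ) : ℂ)⁻¹)) = (R : ℂ) * Complex.I := by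
    rw [show (starRingEnd ℂ) z * (Complex.I * (z * ((R : ℝ) : ℂ)⁻¹))
      = Complex.I * ((starRingEnd ℂ) z * (z * ((R : ℝ) : ℂ)⁻¹)) by ring, hur]
    ring
  refine ⟨L, hL, ?_, ?_, ?_⟩
  · -- operator norm = d
    apply le_antisymm
    · apply ContinuousLinearMap.opNorm_le_bound _ (by positivity)
      intro v
      rw [hnorm v]
      have h1s : ((starRingEnd ℂ) z * v).re ^ 2 + ((d : ℝ) * ((starRingEnd ℂ) z * v).im) ^ 2
          ≤ ((d : ℝ) * (R * ‖v‖)) ^ 2 := by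
        nlinarith [hab v, hd2, sq_nonneg (((starRingEnd ℂ) z * v).re),
          sq_nonneg (((starRingEnd ℂ) z * v).im)]
      have h2s := Real.sqrt_le_sqrt h1s
      rw [Real.sqrt_sq (by positivity)] at h2s
      calc R⁻¹ * Real.sqrt _ ≤ R⁻¹ * ((d : ℝ) * (R * ‖v‖)) := by
            exact mul_le_mul_of_nonneg_left h2s (by positivity)
        _ = (d : ℝ) * ‖v‖ := by field_simp
    · have h := L.unit_le_opNorm (Complex.I * (z * ((R : ℝ) : ℂ)⁻¹)) hvt.le
      rw [hnorm, hut] at h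
      simp only [Complex.mul_re, Complex.mul_im, Complex.ofReal_re, Complex.ofReal_im,
        Complex.I_re, Complex.I_im] at h
      have : R⁻¹ * Real.sqrt ((R * 0 - 0 * 1) ^ 2 + ((d:ℝ) * (R * 1 + 0 * 0)) ^ 2) = (d : ℝ) := by
        rw [show (R * 0 - 0 * 1) ^ 2 + ((d:ℝ) * (R * 1 + 0 * 0)) ^ 2 = ((d:ℝ) * R) ^ 2 by ring,
          Real.sqrt_sq (by positivity)]
        field_simp
      rw [this] at h
      exact h
  · -- membership : value 1 attained
    refine ⟨z * ((R : ℝ) : ℂ)⁻¹, hvr, ?_⟩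
    rw [hnorm, hur]
    simp only [Complex.ofReal_re, Complex.ofReal_im]
    rw [show (R:ℝ) ^ 2 + ((d:ℝ) * 0) ^ 2 = R ^ 2 by ring, Real.sqrt_sq h0.le]
    field_simp
  · -- lower bound
    rintro r ⟨v, hv, rfl⟩
    rw [hnorm v]
    have hge : (R * ‖v‖) ^ 2 ≤ ((starRingEnd ℂ) z * v).re ^ 2
        + ((d : ℝ) * ((starRingEnd ℂ) z * v).im) ^ 2 := by
      nlinarith [hab v, hd2, sq_nonneg (((starRingEnd ℂ) z * v).im)]
    have h2s := Real.sqrt_le_sqrt hge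
    rw [Real.sqrt_sq (by positivity), hv, mul_one] at h2s
    calc (1:ℝ) = R⁻¹ * R := by field_simp
      _ ≤ R⁻¹ * Real.sqrt _ := mul_le_mul_of_nonneg_left h2s (by positivity)

lemma winding_outer (d : ℕ) (hd : 1 ≤ d) (z : ℂ) (h1 : 1 < ‖z‖) :
    ∃ L : ℂ →L[ℝ] ℂ, HasFDerivAt (windingMap d) L z ∧
      ‖L‖ = (d : ℝ) * ‖z‖ ^ (d - 1) ∧
      IsLeast {r : ℝ | ∃ v : ℂ, ‖v‖ = 1 ∧ r = ‖L v‖} ((d : ℝ) * ‖z‖ ^ (d - 1)) := by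
  set c : ℝ := (d : ℝ) * ‖z‖ ^ (d - 1) with hc
  have hcpos : 0 < c := by
    have : 0 < ‖z‖ := lt_trans one_pos h1
    positivity
  have hpow : HasFDerivAt (fun w : ℂ => w ^ d)
      ((ContinuousLinearMap.smulRight (1 : ℂ →L[ℂ] ℂ) ((d : ℂ) * z ^ (d - 1))).restrictScalars ℝ) z :=
    (hasDerivAt_pow d z).hasFDerivAt.restrictScalars ℝ
  have hL : HasFDerivAt (windingMap d)
      ((ContinuousLinearMap.smulRight (1 : ℂ →L[ℂ] ℂ) ((d : ℂ) * z ^ (d - 1))).restrictScalars ℝ)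
      z := by
    refine hpow.congr_of_eventuallyEq ?_
    have hopen : IsOpen {w : ℂ | 1 < ‖w‖} :=
      isOpen_lt continuous_const continuous_norm
    filter_upwards [hopen.mem_nhds (by simpa using h1)] with w hw
    simp [windingMap, not_le.mpr hw]
  set L' : ℂ →L[ℝ] ℂ := (ContinuousLinearMap.smulRight (1 : ℂ →L[ℂ] ℂ)
    ((d : ℂ) * z ^ (d - 1))).restrictScalars ℝ with hL'
  have hnorm : ∀ v : ℂ, ‖L' v‖ = c * ‖v‖ := by
    intro v
    rw [hL']
    simp only [ContinuousLinearMap.coe_restrictScalars', ContinuousLinearMap.smulRight_apply,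
      ContinuousLinearMap.one_apply, smul_eq_mul]
    rw [norm_mul, norm_mul, norm_pow, Complex.norm_natCast]
    simp only [hc]
    ring
  refine ⟨L', hL, ?_, ?_, ?_⟩
  · apply le_antisymm
    · exact ContinuousLinearMap.opNorm_le_bound _ hcpos.le (fun v => (hnorm v).le)
    · have h := ContinuousLinearMap.unit_le_opNorm L' (1 : ℂ) (by simp)
      rw [hnorm 1, norm_one, mul_one] at h
      exact h
  · exact ⟨1, norm_one, by rw [hnorm 1, norm_one, mul_one]⟩
  · rintro r ⟨v, hv, rfl⟩
    rw [hnorm v, hv, mul_one]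

/-- For `0 < |z| < 1` the winding map is real (Fréchet) differentiable at `z`, the operator
norm of its derivative is `d` and its minimal expansion over unit vectors is `1`.
For `|z| > 1` it is differentiable with maximal and minimal expansion both `d * |z|^(d-1)`. -/
theorem windingMap_fderiv_norms (d : ℕ) (hd : 1 ≤ d) :
    (∀ z : ℂ, 0 < ‖z‖ → ‖z‖ < 1 →
      ∃ L : ℂ →L[ℝ] ℂ, HasFDerivAt (windingMap d) L z ∧ ‖L‖ = (d : ℝ) ∧
        IsLeast {r : ℝ | ∃ v : ℂ, ‖v‖ = 1 ∧ r = ‖L v‖} 1) ∧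
    (∀ z : ℂ, 1 < ‖z‖ →
      ∃ L : ℂ →L[ℝ] ℂ, HasFDerivAt (windingMap d) L z ∧
        ‖L‖ = (d : ℝ) * ‖z‖ ^ (d - 1) ∧
        IsLeast {r : ℝ | ∃ v : ℂ, ‖v‖ = 1 ∧ r = ‖L v‖}
          ((d : ℝ) * ‖z‖ ^ (d - 1))) :=
  ⟨fun z h0 h1 => winding_inner d hd z h0 h1, fun z h1 => winding_outer d hd z h1⟩
end

section
/- Let d ≥ 1 be an integer and θ₀ ∈ ℝ. For all points z and w of the sector of angle π/d of the unit disk, i.e. z, w ∈ {r·e^{iθ} : 0 ≤ r < 1, θ₀ − π/(2d) ≤ θ ≤ θ₀ + π/(2d)}, the winding map satisfies |z − w| ≤ |h_d(z) − h_d(w)| ≤ d·|z − w|. -/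
lemma aux_winding (d : ℕ) (hd : 1 ≤ d) (r θ : ℝ) (hr : 0 ≤ r) (hr1 : r ≤ 1) :
    windingMap d ((r : ℂ) * Complex.exp (θ * Complex.I)) =
      (r : ℂ) * Complex.exp (((d : ℝ) * θ : ℝ) * Complex.I) := by
  have habs : ‖(r : ℂ) * Complex.exp (θ * Complex.I)‖ = r := by
    simp [Complex.norm_exp, _root_.abs_of_nonneg hr]
  rw [windingMap, if_pos (by rw [habs]; exact hr1), habs]
  rcases eq_or_lt_of_le hr with h0 | h0
  · subst h0
    rw [show ((0:ℝ):ℂ) = 0 by norm_num, zero_mul, zero_mul, zero_pow (by omega : d ≠ 0), mul_zero]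
  · rw [mul_pow, ← Complex.exp_nat_mul]
    have hrr : (r ^ ((1 : ℝ) - (d : ℝ)) : ℝ) * (r : ℝ) ^ d = r := by
      rw [← Real.rpow_natCast r d, ← Real.rpow_add h0]
      norm_num
    calc (((r ^ ((1:ℝ) - (d:ℝ)) : ℝ)) : ℂ) * ((r:ℂ) ^ d * Complex.exp ((d:ℂ) * (θ * Complex.I)))
        = (((r ^ ((1:ℝ) - (d:ℝ)) : ℝ) * (r:ℝ)^d : ℝ) : ℂ) * Complex.exp ((d:ℂ) * (θ * Complex.I)) := by
          push_cast; ring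
      _ = (r : ℂ) * Complex.exp (((d:ℝ) * θ : ℝ) * Complex.I) := by
          rw [hrr]; push_cast; ring_nf

lemma aux_dist (r s a b : ℝ) :
    ‖(r : ℂ) * Complex.exp (a * Complex.I) - (s : ℂ) * Complex.exp (b * Complex.I)‖ ^ 2
      = r ^ 2 + s ^ 2 - 2 * r * s * Real.cos (a - b) := by
  rw [← Complex.normSq_eq_norm_sq, Complex.normSq_apply]
  simp only [Complex.sub_re, Complex.sub_im, Complex.mul_re, Complex.mul_im,
    Complex.ofReal_re, Complex.ofReal_im, Complex.exp_ofReal_mul_I_re,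
    Complex.exp_ofReal_mul_I_im, Real.cos_sub]
  have ha := Real.sin_sq_add_cos_sq a
  have hb := Real.sin_sq_add_cos_sq b
  nlinarith [ha, hb]

lemma aux_abs_sin (n : ℕ) (x : ℝ) : |Real.sin (n * x)| ≤ n * |Real.sin x| := by
  induction n with
  | zero => simp
  | succ n ih =>
    have : ((n:ℝ) + 1) * x = n * x + x := by ring
    push_cast
    rw [this, Real.sin_add]
    calc |Real.sin (n*x) * Real.cos x + Real.cos (n*x) * Real.sin x|
        ≤ |Real.sin (n*x) * Real.cos x| + |Real.cos (n*x) * Real.sin x| := abs_add_le _ _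
      _ ≤ |Real.sin (n*x)| + |Real.sin x| := by
          rw [abs_mul, abs_mul]
          have c1 := Real.abs_cos_le_one x
          have c2 := Real.abs_cos_le_one ((n:ℝ)*x)
          nlinarith [abs_nonneg (Real.sin ((n:ℝ)*x)), abs_nonneg (Real.sin x)]
      _ ≤ n * |Real.sin x| + |Real.sin x| := by gcongr
      _ = ((n:ℝ)+1) * |Real.sin x| := by ring

lemma aux_one_sub_cos (n : ℕ) (x : ℝ) :
    1 - Real.cos (n * x) ≤ (n : ℝ)^2 * (1 - Real.cos x) := by
  have h1 : ∀ y : ℝ, 1 - Real.cos y = 2 * Real.sin (y/2) ^ 2 := by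
    intro y
    have h := Real.cos_sq (y/2)
    rw [show 2*(y/2) = y by ring] at h
    nlinarith [Real.sin_sq_add_cos_sq (y/2)]
  rw [h1, h1]
  have h2 : |Real.sin (n * x / 2)| ≤ n * |Real.sin (x/2)| := by
    have := aux_abs_sin n (x/2)
    rwa [show (n:ℝ) * (x/2) = n * x / 2 by ring] at this
  have h3 : Real.sin (n*x/2)^2 ≤ ((n:ℝ) * |Real.sin (x/2)|)^2 := by
    rw [← sq_abs (Real.sin (n*x/2))]
    exact pow_le_pow_left₀ (abs_nonneg _) h2 2
  have h4 : ((n:ℝ) * |Real.sin (x/2)|)^2 = (n:ℝ)^2 * Real.sin (x/2)^2 := by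
    rw [mul_pow, sq_abs]
  nlinarith


/-- On every sector of angle `π/d` of the unit disk, the winding map `h_d` satisfies
`|z - w| ≤ |h_d(z) - h_d(w)| ≤ d * |z - w|`. -/
theorem windingMap_biLipschitz_on_sector (d : ℕ) (hd : 1 ≤ d) (θ₀ : ℝ) (z w : ℂ)
    (hz : ∃ r θ : ℝ, 0 ≤ r ∧ r < 1 ∧
      θ₀ - Real.pi / (2 * d) ≤ θ ∧ θ ≤ θ₀ + Real.pi / (2 * d) ∧
      z = (r : ℂ) * Complex.exp (θ * Complex.I))
    (hw : ∃ r θ : ℝ, 0 ≤ r ∧ r < 1 ∧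
      θ₀ - Real.pi / (2 * d) ≤ θ ∧ θ ≤ θ₀ + Real.pi / (2 * d) ∧
      w = (r : ℂ) * Complex.exp (θ * Complex.I)) :
    ‖z - w‖ ≤ ‖windingMap d z - windingMap d w‖ ∧
    ‖windingMap d z - windingMap d w‖ ≤ (d : ℝ) * ‖z - w‖ := by
  obtain ⟨r, θ, hr0, hr1, hθ1, hθ2, hzeq⟩ := hz
  obtain ⟨s, φ, hs0, hs1, hφ1, hφ2, hweq⟩ := hw
  subst hzeq; subst hweq
  have hd1 : (1:ℝ) ≤ (d:ℝ) := by exact_mod_cast hd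
  have hdpos : (0:ℝ) < d := by linarith
  set t := θ - φ with htdef
  have ht : |t| ≤ Real.pi / d := by
    rw [abs_le]
    constructor
    · have : Real.pi / d = 2 * (Real.pi / (2*d)) := by field_simp
      rw [htdef, this]; linarith
    · have : Real.pi / d = 2 * (Real.pi / (2*d)) := by field_simp
      rw [htdef, this]; linarith
  -- rewrite winding map values
  rw [aux_winding d hd r θ hr0 hr1.le, aux_winding d hd s φ hs0 hs1.le]
  have hA2 := aux_dist r s θ φ
  have hB2 := aux_dist r s ((d:ℝ)*θ) ((d:ℝ)*φ)
  rw [show (d:ℝ)*θ - (d:ℝ)*φ = (d:ℝ)*t by rw [htdef]; ring] at hB2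
  set A := ‖(r:ℂ) * Complex.exp (θ*Complex.I) - (s:ℂ) * Complex.exp (φ*Complex.I)‖ with hAdef
  set B := ‖(r:ℂ) * Complex.exp ((((d:ℝ)*θ : ℝ) : ℂ)*Complex.I) - (s:ℂ) * Complex.exp ((((d:ℝ)*φ : ℝ) : ℂ)*Complex.I)‖ with hBdef
  have hAn : 0 ≤ A := norm_nonneg _
  have hBn : 0 ≤ B := norm_nonneg _
  have hrs : 0 ≤ r * s := mul_nonneg hr0 hs0
  -- lower bound : cos (d t) ≤ cos t
  have hcos1 : Real.cos ((d:ℝ)*t) ≤ Real.cos t := by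
    have h1 : |(d:ℝ)*t| = (d:ℝ)*|t| := by rw [abs_mul, abs_of_pos hdpos]
    have h2 : (d:ℝ)*|t| ≤ Real.pi := by
      have := mul_le_mul_of_nonneg_left ht (le_of_lt hdpos)
      calc (d:ℝ)*|t| ≤ (d:ℝ) * (Real.pi / d) := this
        _ = Real.pi := by field_simp
    have h3 : |t| ≤ (d:ℝ)*|t| := by nlinarith [abs_nonneg t]
    have := Real.cos_le_cos_of_nonneg_of_le_pi (abs_nonneg t) (h1 ▸ h2) (h1 ▸ h3)
    rwa [Real.cos_abs, Real.cos_abs] at this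
  have hAB2 : A^2 ≤ B^2 := by rw [hA2, hB2, htdef]; nlinarith
  have lower : A ≤ B := by
    have := Real.sqrt_le_sqrt hAB2
    rwa [Real.sqrt_sq hAn, Real.sqrt_sq hBn] at this
  -- upper bound
  have key2 := aux_one_sub_cos d t
  have hupper2 : B^2 ≤ ((d:ℝ)*A)^2 := by
    rw [hB2, mul_pow, hA2, htdef]
    have hint1 := mul_le_mul_of_nonneg_left key2 (by positivity : (0:ℝ) ≤ 2*(r*s))
    have hd2 : (1:ℝ) ≤ (d:ℝ)^2 := by nlinarith
    have hint2 := mul_nonneg (sub_nonneg.2 hd2) (sq_nonneg (r-s))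
    nlinarith [hint1, hint2]
  have upper : B ≤ (d:ℝ)*A := by
    have := Real.sqrt_le_sqrt hupper2
    rwa [Real.sqrt_sq hBn, Real.sqrt_sq (mul_nonneg hdpos.le hAn)] at this
  exact ⟨lower, upper⟩
end

section
/- Let d ≥ 1 be an integer. For every z ∈ ℂ with 0 < |z| < 1, the real Fréchet derivative of the winding map h_d at z has Jacobian determinant det Dh_d(z) = d, and consequently ‖Dh_d(z)‖² ≤ d·|det Dh_d(z)| (so h_d satisfies the K-quasi-regularity inequality with K = d on the punctured unit disk). For |z| > 1, h_d is complex-differentiable at z, so ‖Dh_d(z)‖² = |det Dh_d(z)| there. -/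
open Complex

/-- The real-linear map `w ↦ a·w + b·conj w` as a continuous linear map. -/
noncomputable def cmap (a b : ℂ) : ℂ →L[ℝ] ℂ :=
  a • (ContinuousLinearMap.id ℝ ℂ) + b • (conjCLE : ℂ ≃L[ℝ] ℂ).toContinuousLinearMap

lemma cmap_apply (a b w : ℂ) : cmap a b w = a * w + b * (starRingEnd ℂ) w := by
  simp [cmap, Complex.conjCLE_apply]

lemma cmap_det (a b : ℂ) :
    LinearMap.det (cmap a b).toLinearMap = normSq a - normSq b := by
  rw [← LinearMap.det_toMatrix Complex.basisOneI, Matrix.det_fin_two]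
  simp [LinearMap.toMatrix_apply, cmap_apply, Complex.normSq_apply]
  ring

lemma cmap_norm_le (a b : ℂ) : ‖cmap a b‖ ≤ ‖a‖ + ‖b‖ := by
  refine ContinuousLinearMap.opNorm_le_bound _ (by positivity) fun w => ?_
  rw [cmap_apply]
  calc ‖a * w + b * (starRingEnd ℂ) w‖ ≤ ‖a * w‖ + ‖b * (starRingEnd ℂ) w‖ := norm_add_le _ _
    _ = (‖a‖ + ‖b‖) * ‖w‖ := by simp only [norm_mul, Complex.norm_conj]; ring

lemma windingMap_hasFDerivAt_inside (d : ℕ) (hd : 1 ≤ d) (z : ℂ)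
    (hz0 : 0 < ‖z‖) (hz1 : ‖z‖ < 1) :
    HasFDerivAt (windingMap d)
      (cmap (((((d:ℝ)+1)/2 * (normSq z ^ (((1:ℝ)-d)/2)) : ℝ) : ℂ) * z ^ (d-1))
            (((((1:ℝ)-d)/2 * (normSq z ^ (((1:ℝ)-d)/2)) / normSq z : ℝ) : ℂ) * z ^ (d+1))) z := by
  have hzne : z ≠ 0 := by
    intro h; rw [h] at hz0; simp at hz0
  have hs0 : 0 < normSq z := normSq_pos.2 hzne
  set t : ℝ := ((1:ℝ) - d)/2 with ht
  set s : ℝ := normSq z with hsdef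
  have hre : HasFDerivAt (fun w : ℂ => w.re) (Complex.reCLM : ℂ →L[ℝ] ℝ) z :=
    Complex.reCLM.hasFDerivAt
  have him : HasFDerivAt (fun w : ℂ => w.im) (Complex.imCLM : ℂ →L[ℝ] ℝ) z :=
    Complex.imCLM.hasFDerivAt
  have h1 := (hre.mul hre).add (him.mul him)
  have h1' : HasFDerivAt (fun w : ℂ => Complex.normSq w)
      (z.re • (Complex.reCLM : ℂ →L[ℝ] ℝ) + z.re • (Complex.reCLM : ℂ →L[ℝ] ℝ)
       + (z.im • (Complex.imCLM : ℂ →L[ℝ] ℝ) + z.im • (Complex.imCLM : ℂ →L[ℝ] ℝ))) z := by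
    simpa only [Complex.normSq_apply, Pi.add_def, Pi.mul_def] using h1
  have h2 := h1'.rpow_const (p := t) (Or.inl hs0.ne')
  have h3 := Complex.ofRealCLM.hasFDerivAt.comp z h2
  have h4 := ((hasDerivAt_pow d z).hasFDerivAt).restrictScalars ℝ
  have h5 := h3.mul h4
  have hF : HasFDerivAt (fun w : ℂ => (↑(Complex.normSq w ^ t) : ℂ) * w ^ d) _ z := h5
  have hF' : HasFDerivAt (fun w : ℂ => (↑(Complex.normSq w ^ t):ℂ) * w ^ d)
      (cmap (((((d:ℝ)+1)/2 * (s ^ t) : ℝ) : ℂ) * z ^ (d-1))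
            (((t * (s ^ t) / s : ℝ) : ℂ) * z ^ (d+1))) z := by
    convert hF using 1
    refine ContinuousLinearMap.ext fun w => ?_
    simp only [cmap_apply, ContinuousLinearMap.smulRight_apply, ContinuousLinearMap.add_apply,
      ContinuousLinearMap.coe_smul', Pi.smul_apply, ContinuousLinearMap.coe_comp',
      Function.comp_apply, ContinuousLinearMap.coe_restrictScalars',
      Complex.ofRealCLM_apply, Complex.reCLM_apply, Complex.imCLM_apply,
      ContinuousLinearMap.one_apply, smul_eq_mul, ContinuousLinearMap.toSpanSingleton_apply]
    have hdot : ((z.re * w.re + z.re * w.re + (z.im * w.im + z.im * w.im) : ℝ) : ℂ)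
        = (starRingEnd ℂ) z * w + z * (starRingEnd ℂ) w := by
      simp [Complex.ext_iff, Complex.add_re, Complex.mul_re, Complex.mul_im]
      constructor <;> ring
    rw [Real.rpow_sub hs0, Real.rpow_one]
    rw [show Complex.normSq z = s from rfl]
    push_cast [hdot]
    have hsne : (s : ℂ) ≠ 0 := by exact_mod_cast hs0.ne'
    have hsc : (s : ℂ) = z * (starRingEnd ℂ) z := by
      rw [hsdef]; exact (Complex.mul_conj z).symm
    obtain ⟨k, hk⟩ : ∃ k, d = k + 1 := ⟨d - 1, (Nat.succ_pred_eq_of_pos hd).symm⟩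
    subst hk
    simp only [Nat.add_sub_cancel]
    have htc : (t : ℂ) = -(k : ℂ)/2 := by rw [ht]; push_cast; ring
    rw [htc, hsc]
    have hzc : z * (starRingEnd ℂ) z ≠ 0 := by
      rw [← hsc]; exact_mod_cast hs0.ne'
    have hconj : (starRingEnd ℂ) z ≠ 0 := by simpa using hzne
    field_simp
    push_cast
    ring
  refine hF'.congr_of_eventuallyEq ?_
  have hopen : IsOpen {w : ℂ | 0 < ‖w‖ ∧ ‖w‖ < 1} :=
    (isOpen_lt continuous_const continuous_norm).inter
      (isOpen_lt continuous_norm continuous_const)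
  filter_upwards [hopen.mem_nhds ⟨hz0, hz1⟩] with w hw
  have hw0 : (0:ℝ) < ‖w‖ := hw.1
  have : ‖w‖ ^ ((1:ℝ) - d) = Complex.normSq w ^ t := by
    rw [← Complex.sq_norm, ← Real.rpow_natCast (‖w‖) 2,
      ← Real.rpow_mul (norm_nonneg w)]
    rw [ht]
    congr 1
    push_cast
    ring
  simp [windingMap, hw.2.le, this]

/-- On the punctured unit disk the real Fréchet derivative of `h_d` has Jacobian
determinant `d`, and `‖Dh_d(z)‖² ≤ d·|det Dh_d(z)|` (the `K`-quasi-regularity inequality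
with `K = d`).  For `|z| > 1` the map `h_d` is complex-differentiable, so there
`‖Dh_d(z)‖² = |det Dh_d(z)|`. -/
theorem windingMap_quasiregular_ineq (d : ℕ) (hd : 1 ≤ d) :
    (∀ z : ℂ, 0 < ‖z‖ → ‖z‖ < 1 →
      ∃ L : ℂ →L[ℝ] ℂ, HasFDerivAt (windingMap d) L z ∧
        LinearMap.det (L.toLinearMap) = (d : ℝ) ∧
        ‖L‖ ^ 2 ≤ (d : ℝ) * |LinearMap.det (L.toLinearMap)|) ∧
    (∀ z : ℂ, 1 < ‖z‖ →
      ∃ L : ℂ →L[ℂ] ℂ, HasFDerivAt (windingMap d) L z ∧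
        ‖L.restrictScalars ℝ‖ ^ 2 =
          |LinearMap.det ((L.restrictScalars ℝ).toLinearMap)|) := by
  constructor
  · intro z hz0 hz1
    have hzne : z ≠ 0 := by intro h; rw [h] at hz0; simp at hz0
    have hs0 : 0 < normSq z := normSq_pos.2 hzne
    set t : ℝ := ((1:ℝ) - d)/2 with ht
    set U : ℝ := normSq z ^ t with hU
    set r : ℝ := ‖z‖ with hr
    set a : ℂ := ((((d:ℝ)+1)/2 * U : ℝ) : ℂ) * z ^ (d-1) with ha
    set b : ℂ := ((t * U / normSq z : ℝ) : ℂ) * z ^ (d+1) with hb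
    have hU0 : 0 < U := Real.rpow_pos_of_pos hs0 t
    -- key cancellation
    have hkey : U * r ^ (d-1) = 1 := by
      have h1 : U = r ^ ((1:ℝ) - d) := by
        rw [hU, ← Complex.sq_norm, ← Real.rpow_natCast (‖z‖) 2,
          ← Real.rpow_mul (norm_nonneg z), ht]
        congr 1
        push_cast
        ring
      rw [h1, ← Real.rpow_natCast r (d-1), ← Real.rpow_add hz0,
        show ((1:ℝ) - d) + ((d-1 : ℕ) : ℝ) = 0 by
          rw [Nat.cast_sub hd]; push_cast; ring,
        Real.rpow_zero]
    have habs_a : ‖a‖ = ((d:ℝ)+1)/2 := by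
      rw [ha, norm_mul, Complex.norm_real, Real.norm_eq_abs, norm_pow, ← hr,
        _root_.abs_of_nonneg (by positivity)]
      rw [mul_assoc, hkey, mul_one]
    have habs_b : ‖b‖ = ((d:ℝ)-1)/2 := by
      have hrpow : r ^ (d+1) = r ^ (d-1) * normSq z := by
        rw [← Complex.sq_norm, ← hr, ← pow_add]
        congr 1
        omega
      have htabs : |t| = ((d:ℝ)-1)/2 := by
        have h1 : (1:ℝ) ≤ (d:ℝ) := by exact_mod_cast hd
        rw [ht, abs_div, abs_sub_comm, _root_.abs_of_nonneg (by linarith),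
          _root_.abs_of_nonneg (by norm_num : (0:ℝ) ≤ 2)]
      rw [hb, norm_mul, Complex.norm_real, Real.norm_eq_abs, norm_pow, ← hr, hrpow]
      have hstep : |t * U / normSq z| * (r ^ (d-1) * normSq z)
          = |t| * (U * r ^ (d-1)) := by
        rw [abs_div, abs_mul, _root_.abs_of_nonneg hU0.le, _root_.abs_of_nonneg hs0.le]
        field_simp
      rw [hstep, hkey, mul_one, htabs]
    have hdet : LinearMap.det (cmap a b).toLinearMap = (d : ℝ) := by
      rw [cmap_det, ← Complex.sq_norm, ← Complex.sq_norm, habs_a, habs_b]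
      have h1 : (1:ℝ) ≤ (d:ℝ) := by exact_mod_cast hd
      ring
    refine ⟨cmap a b, ?_, hdet, ?_⟩
    · exact windingMap_hasFDerivAt_inside d hd z hz0 hz1
    · rw [hdet, _root_.abs_of_nonneg (by positivity : (0:ℝ) ≤ (d:ℝ))]
      have hnorm : ‖cmap a b‖ ≤ (d : ℝ) := by
        refine (cmap_norm_le a b).trans ?_
        rw [habs_a, habs_b]
        ring_nf
        rfl
      calc ‖cmap a b‖ ^ 2 ≤ (d:ℝ) ^ 2 := by
            exact pow_le_pow_left₀ (norm_nonneg _) hnorm 2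
        _ = (d:ℝ) * (d:ℝ) := sq (d:ℝ) ▸ by ring
  · intro z hz
    set c : ℂ := (d : ℂ) * z ^ (d - 1) with hc
    refine ⟨ContinuousLinearMap.smulRight (1 : ℂ →L[ℂ] ℂ) c, ?_, ?_⟩
    · have h1 : HasFDerivAt (fun w : ℂ => w ^ d)
          (ContinuousLinearMap.smulRight (1 : ℂ →L[ℂ] ℂ) c) z :=
        (hasDerivAt_pow d z).hasFDerivAt
      refine h1.congr_of_eventuallyEq ?_
      have hopen : IsOpen {w : ℂ | 1 < ‖w‖} :=
        isOpen_lt continuous_const continuous_norm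
      filter_upwards [hopen.mem_nhds hz] with w hw
      simp [windingMap, not_le.mpr hw]
    · have hres : (ContinuousLinearMap.smulRight (1 : ℂ →L[ℂ] ℂ) c).restrictScalars ℝ
          = cmap c 0 := by
        ext w
        simp [cmap_apply, mul_comm]
      rw [hres, cmap_det]
      have hn : ‖(ContinuousLinearMap.smulRight (1 : ℂ →L[ℂ] ℂ) c).restrictScalars ℝ‖
          = ‖c‖ := by
        rw [ContinuousLinearMap.norm_restrictScalars, ContinuousLinearMap.norm_smulRight_apply]
        simp
      rw [hres] at hn
      rw [hn, Complex.sq_norm, map_zero, sub_zero, _root_.abs_of_nonneg (normSq_nonneg c)]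
end

section
/- For every integer d ≥ 1, the winding map h_d is d-Lipschitz on the closed unit disk: |h_d(z) − h_d(w)| ≤ d·|z − w| for all z, w ∈ ℂ with |z| ≤ 1 and |w| ≤ 1. -/
lemma geom_abs_le (d : ℕ) (ω : ℂ) (hω : ‖ω‖ = 1) :
    ‖ω ^ d - 1‖ ≤ (d : ℝ) * ‖ω - 1‖ := by
  have h := geom_sum_mul ω d
  calc ‖ω ^ d - 1‖
      = ‖∑ i ∈ Finset.range d, ω ^ i‖ * ‖ω - 1‖ := by
        rw [← norm_mul, h]
    _ ≤ (d : ℝ) * ‖ω - 1‖ := by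
        gcongr
        calc ‖∑ i ∈ Finset.range d, ω ^ i‖
            ≤ ∑ i ∈ Finset.range d, ‖ω ^ i‖ :=
              norm_sum_le _ _
          _ = (d : ℝ) := by simp [norm_pow, hω]

lemma key_re (d : ℕ) (ω : ℂ) (hω : ‖ω‖ = 1) :
    1 - (ω ^ d).re ≤ (d : ℝ) ^ 2 * (1 - ω.re) := by
  have habs : ‖ω ^ d‖ = 1 := by rw [norm_pow, hω]; simp
  have e1 : Complex.normSq (ω ^ d - 1) = 2 - 2 * (ω ^ d).re := by
    rw [Complex.normSq_sub]
    simp [Complex.normSq_eq_norm_sq, habs]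
    ring
  have e2 : Complex.normSq (ω - 1) = 2 - 2 * ω.re := by
    rw [Complex.normSq_sub]
    simp [Complex.normSq_eq_norm_sq, hω]
    ring
  have h2 := geom_abs_le d ω hω
  have h3 : ‖ω ^ d - 1‖ ^ 2 ≤ ((d : ℝ) * ‖ω - 1‖) ^ 2 := by
    gcongr
  rw [Complex.sq_norm, mul_pow, Complex.sq_norm, e1, e2] at h3
  nlinarith [h3]

-- representation lemma
lemma windingMap_eq (d : ℕ) (z : ℂ) (hz0 : z ≠ 0) (hz : ‖z‖ ≤ 1) :
    windingMap d z = ((‖z‖ : ℝ) : ℂ) * (z / ((‖z‖ : ℝ) : ℂ)) ^ d := by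
  have hr : (0:ℝ) < ‖z‖ := norm_pos_iff.mpr hz0
  rw [windingMap, if_pos hz]
  have h1 : (‖z‖ : ℝ) ^ ((1:ℝ) - (d:ℝ)) = ‖z‖ / ‖z‖ ^ d := by
    rw [Real.rpow_sub hr, Real.rpow_one, Real.rpow_natCast]
  rw [h1, div_pow]
  have hrc : ((‖z‖ : ℝ) : ℂ) ≠ 0 := by
    simpa using hr.ne'
  push_cast
  field_simp

/-- The winding map `h_d` is `d`-Lipschitz on the closed unit disk. -/
theorem windingMap_lipschitz_on_disk (d : ℕ) (hd : 1 ≤ d) (z w : ℂ)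
    (hz : ‖z‖ ≤ 1) (hw : ‖w‖ ≤ 1) :
    ‖windingMap d z - windingMap d w‖ ≤ (d : ℝ) * ‖z - w‖ := by
  have hd1 : (1:ℝ) ≤ (d:ℝ) := by exact_mod_cast hd
  have hzero : windingMap d 0 = 0 := by
    have : (0:ℂ) ^ d = 0 := zero_pow (by omega)
    simp [windingMap, this]
  -- abs of windingMap equals abs z on the disk
  have habsW : ∀ x : ℂ, ‖x‖ ≤ 1 → ‖windingMap d x‖ = ‖x‖ := by
    intro x hx
    rcases eq_or_ne x 0 with rfl | hx0
    · simp [hzero]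
    · have hr : (0:ℝ) < ‖x‖ := norm_pos_iff.mpr hx0
      rw [windingMap_eq d x hx0 hx]
      have hu : ‖x / ((‖x‖ : ℝ) : ℂ)‖ = 1 := by
        rw [norm_div, Complex.norm_real, Real.norm_eq_abs, abs_of_pos hr, div_self hr.ne']
      rw [norm_mul, norm_pow, hu, Complex.norm_real, Real.norm_eq_abs, abs_of_pos hr]
      simp
  rcases eq_or_ne z 0 with rfl | hz0
  · rw [hzero, zero_sub, norm_neg, habsW w hw, zero_sub, norm_neg]
    nlinarith [norm_nonneg w]
  rcases eq_or_ne w 0 with rfl | hw0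
  · rw [hzero, sub_zero, habsW z hz, sub_zero]
    nlinarith [norm_nonneg z]
  -- main case
  set r : ℝ := ‖z‖ with hr_def
  set s : ℝ := ‖w‖ with hs_def
  have hr : 0 < r := norm_pos_iff.mpr hz0
  have hs : 0 < s := norm_pos_iff.mpr hw0
  set u : ℂ := z / (r : ℂ) with hu_def
  set v : ℂ := w / (s : ℂ) with hv_def
  have hu : ‖u‖ = 1 := by
    rw [hu_def, norm_div, Complex.norm_real, Real.norm_eq_abs, abs_of_pos hr, div_self hr.ne']
  have hv : ‖v‖ = 1 := by
    rw [hv_def, norm_div, Complex.norm_real, Real.norm_eq_abs, abs_of_pos hs, div_self hs.ne']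
  have hrc : (r : ℂ) ≠ 0 := by exact_mod_cast hr.ne'
  have hsc : (s : ℂ) ≠ 0 := by exact_mod_cast hs.ne'
  have hzu : z = (r : ℂ) * u := by
    rw [hu_def, mul_div_cancel₀ _ hrc]
  have hwv : w = (s : ℂ) * v := by
    rw [hv_def, mul_div_cancel₀ _ hsc]
  rw [windingMap_eq d z hz0 hz, windingMap_eq d w hw0 hw, ← hr_def, ← hs_def,
    ← hu_def, ← hv_def]
  set ω : ℂ := u * starRingEnd ℂ v with hω_def
  have hωabs : ‖ω‖ = 1 := by
    rw [hω_def, norm_mul, Complex.norm_conj, hu, hv, one_mul]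
  have hkey := key_re d ω hωabs
  -- normSq computations
  have huv : (u ^ d * starRingEnd ℂ (v ^ d)) = ω ^ d := by
    rw [hω_def, mul_pow, map_pow]
  have e1 : Complex.normSq ((r : ℂ) * u ^ d - (s : ℂ) * v ^ d)
      = r ^ 2 + s ^ 2 - 2 * (r * s) * (ω ^ d).re := by
    rw [Complex.normSq_sub, map_mul, map_mul, Complex.normSq_ofReal, Complex.normSq_ofReal]
    have h1 : Complex.normSq (u ^ d) = 1 := by
      rw [← Complex.sq_norm, norm_pow, hu]; simp
    have h2 : Complex.normSq (v ^ d) = 1 := by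
      rw [← Complex.sq_norm, norm_pow, hv]; simp
    have h3 : ((r : ℂ) * u ^ d * starRingEnd ℂ ((s : ℂ) * v ^ d)).re
        = r * s * (ω ^ d).re := by
      rw [map_mul, Complex.conj_ofReal]
      have : (r : ℂ) * u ^ d * ((s : ℂ) * starRingEnd ℂ (v ^ d))
          = ((r * s : ℝ) : ℂ) * (u ^ d * starRingEnd ℂ (v ^ d)) := by
        push_cast; ring
      rw [this, huv, Complex.re_ofReal_mul]
    rw [h1, h2, h3]; ring
  have e2 : Complex.normSq (z - w) = r ^ 2 + s ^ 2 - 2 * (r * s) * ω.re := by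
    rw [hzu, hwv, Complex.normSq_sub, map_mul, map_mul, Complex.normSq_ofReal,
      Complex.normSq_ofReal]
    have h1 : Complex.normSq u = 1 := by rw [← Complex.sq_norm, hu]; simp
    have h2 : Complex.normSq v = 1 := by rw [← Complex.sq_norm, hv]; simp
    have h3 : ((r : ℂ) * u * starRingEnd ℂ ((s : ℂ) * v)).re = r * s * ω.re := by
      rw [map_mul, Complex.conj_ofReal]
      have : (r : ℂ) * u * ((s : ℂ) * starRingEnd ℂ v)
          = ((r * s : ℝ) : ℂ) * (u * starRingEnd ℂ v) := by
        push_cast; ring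
      rw [this, ← hω_def, Complex.re_ofReal_mul]
    rw [h1, h2, h3]; ring
  -- normSq inequality
  have hsq : Complex.normSq ((r : ℂ) * u ^ d - (s : ℂ) * v ^ d)
      ≤ (d : ℝ) ^ 2 * Complex.normSq (z - w) := by
    rw [e1, e2]
    have t1 : 2 * (r * s) * (1 - (ω ^ d).re) ≤ 2 * (r * s) * ((d : ℝ) ^ 2 * (1 - ω.re)) :=
      mul_le_mul_of_nonneg_left hkey (by positivity)
    have hd2 : (1:ℝ) ≤ (d : ℝ) ^ 2 := by nlinarith [hd1]
    have t2 : (r - s) ^ 2 ≤ (d : ℝ) ^ 2 * (r - s) ^ 2 :=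
      le_mul_of_one_le_left (sq_nonneg _) hd2
    nlinarith [t1, t2]
  have h1 : ‖(r : ℂ) * u ^ d - (s : ℂ) * v ^ d‖
      = Real.sqrt (Complex.normSq ((r : ℂ) * u ^ d - (s : ℂ) * v ^ d)) :=
    by rw [Complex.norm_def]
  have h2 : (d : ℝ) * ‖z - w‖
      = Real.sqrt ((d : ℝ) ^ 2 * Complex.normSq (z - w)) := by
    rw [Real.sqrt_mul (sq_nonneg _), Real.sqrt_sq (by positivity), Complex.norm_def]
  rw [h1, h2]
  exact Real.sqrt_le_sqrt hsq
end

section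
/- Let f, g, h : ℂ → ℂ and z ∈ ℂ. Suppose h is complex-differentiable at z, g is real (Fréchet) differentiable at z′ := h(z), and f is complex-differentiable at z″ := g(z′). Then the weighted operator norm of the derivative of the composition satisfies the exact product formula ‖D(f ∘ g ∘ h)(z)‖_# = f^#(z″) · ‖Dg(z′)‖_# · h^#(z). -/
/-- The spherical derivative `f^#(w) = ((1 + |w|²)/(1 + |f(w)|²)) · |f'(w)|`. -/
noncomputable def sphDeriv (f : ℂ → ℂ) (w : ℂ) : ℝ :=
  ((1 + ‖w‖ ^ 2) / (1 + ‖f w‖ ^ 2)) * ‖deriv f w‖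

/-- The weighted operator norm `‖Dk(w)‖_# = ((1 + |w|²)/(1 + |k(w)|²)) · ‖Dk(w)‖`,
where `Dk(w)` is the real Fréchet derivative of `k` at `w`. -/
noncomputable def wOpNorm (k : ℂ → ℂ) (w : ℂ) : ℝ :=
  ((1 + ‖w‖ ^ 2) / (1 + ‖k w‖ ^ 2)) * ‖fderiv ℝ k w‖

lemma fderiv_real_eq_smul (f : ℂ → ℂ) (w : ℂ) (hf : DifferentiableAt ℂ f w) :
    fderiv ℝ f w = (deriv f w) • (ContinuousLinearMap.id ℝ ℂ) := by
  rw [hf.fderiv_restrictScalars ℝ]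
  ext x
  simp only [ContinuousLinearMap.coe_restrictScalars', ContinuousLinearMap.smul_apply,
    ContinuousLinearMap.id_apply]
  have hx : x = x • (1 : ℂ) := by simp
  conv_lhs => rw [hx, map_smul]
  rw [fderiv_apply_one_eq_deriv]
  simp only [smul_eq_mul]
  ring

lemma norm_comp_mul_left (T : ℂ →L[ℝ] ℂ) (c : ℂ) :
    ‖(c • ContinuousLinearMap.id ℝ ℂ).comp T‖ = ‖c‖ * ‖T‖ := by
  have : (c • ContinuousLinearMap.id ℝ ℂ).comp T = c • T := by
    ext x; simp
  rw [this]
  exact norm_smul c T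

lemma norm_comp_mul_right (T : ℂ →L[ℝ] ℂ) (c : ℂ) :
    ‖T.comp (c • ContinuousLinearMap.id ℝ ℂ)‖ = ‖c‖ * ‖T‖ := by
  rcases eq_or_ne c 0 with rfl | hc
  · have : T.comp ((0:ℂ) • ContinuousLinearMap.id ℝ ℂ) = 0 := by ext x; simp
    rw [this]; simp
  · apply le_antisymm
    · calc ‖T.comp (c • ContinuousLinearMap.id ℝ ℂ)‖
          ≤ ‖T‖ * ‖c • ContinuousLinearMap.id ℝ ℂ‖ := ContinuousLinearMap.opNorm_comp_le _ _
      _ = ‖c‖ * ‖T‖ := by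
            rw [show ‖c • ContinuousLinearMap.id ℝ ℂ‖ = ‖c‖ from by
              rw [norm_smul c (ContinuousLinearMap.id ℝ ℂ), ContinuousLinearMap.norm_id, mul_one]]
            ring
    · have hT : T = (T.comp (c • ContinuousLinearMap.id ℝ ℂ)).comp
          (c⁻¹ • ContinuousLinearMap.id ℝ ℂ) := by
        ext x
        simp only [ContinuousLinearMap.coe_comp', Function.comp_apply,
          ContinuousLinearMap.smul_apply, ContinuousLinearMap.id_apply, smul_eq_mul]
        rw [← mul_assoc, mul_inv_cancel₀ hc, one_mul]
      have := ContinuousLinearMap.opNorm_comp_le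
        (T.comp (c • ContinuousLinearMap.id ℝ ℂ)) (c⁻¹ • ContinuousLinearMap.id ℝ ℂ)
      rw [← hT, norm_smul c⁻¹ (ContinuousLinearMap.id ℝ ℂ), ContinuousLinearMap.norm_id,
        mul_one, norm_inv] at this
      have hc' : (0:ℝ) < ‖c‖ := norm_pos_iff.mpr hc
      calc ‖c‖ * ‖T‖ ≤ ‖c‖ * (‖T.comp (c • ContinuousLinearMap.id ℝ ℂ)‖ * ‖c‖⁻¹) :=
            mul_le_mul_of_nonneg_left this hc'.le
        _ = ‖T.comp (c • ContinuousLinearMap.id ℝ ℂ)‖ := by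
            field_simp

/-- If `h` is complex-differentiable at `z`, `g` is real differentiable at `z' = h(z)`,
and `f` is complex-differentiable at `z'' = g(z')`, then
`‖D(f ∘ g ∘ h)(z)‖_# = f^#(z'') · ‖Dg(z')‖_# · h^#(z)`. -/
theorem wOpNorm_comp (f g h : ℂ → ℂ) (z : ℂ)
    (hh : DifferentiableAt ℂ h z)
    (hg : DifferentiableAt ℝ g (h z))
    (hf : DifferentiableAt ℂ f (g (h z))) :
    wOpNorm (fun x => f (g (h x))) z =
      sphDeriv f (g (h z)) * wOpNorm g (h z) * sphDeriv h z := by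
  have hhR := hh.restrictScalars ℝ
  have hfR := hf.restrictScalars ℝ
  have hgh : DifferentiableAt ℝ (g ∘ h) z := hg.comp z hhR
  have key : fderiv ℝ (fun x => f (g (h x))) z =
      ((fderiv ℝ f (g (h z))).comp (fderiv ℝ g (h z))).comp (fderiv ℝ h z) := by
    have e1 : (fun x => f (g (h x))) = f ∘ (g ∘ h) := rfl
    rw [e1, fderiv_comp z hfR hgh, fderiv_comp z hg hhR, ContinuousLinearMap.comp_assoc]
    rfl
  have hnorm : ‖fderiv ℝ (fun x => f (g (h x))) z‖ =
      ‖deriv f (g (h z))‖ * ‖fderiv ℝ g (h z)‖ * ‖deriv h z‖ := by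
    rw [key, fderiv_real_eq_smul f _ hf, fderiv_real_eq_smul h _ hh,
      ContinuousLinearMap.comp_assoc, norm_comp_mul_left, norm_comp_mul_right]
    ring
  unfold wOpNorm sphDeriv
  rw [hnorm]
  have h1 : (0:ℝ) < 1 + ‖h z‖ ^ 2 := by positivity
  have h2 : (0:ℝ) < 1 + ‖g (h z)‖ ^ 2 := by positivity
  have h3 : (0:ℝ) < 1 + ‖f (g (h z))‖ ^ 2 := by positivity
  field_simp
end
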